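/- arXiv:2208.04538 — 2 statements merged into one kernel-verified Lean document; each statement's English description precedes it below -/
import Mathlib

section
/- Let u ∈ C⁴([0,1/2]) satisfy the elastica equation (1/√(1+u'²)) · d/dx( κ_u'/√(1+u'²) ) + (1/2)κ_u³ = 0 on (0,1/2), where κ_u = u''/(1+u'²)^{3/2}, together with the boundary conditions u(0) = 0, u''(0) = 0, u(1/2) > 0 and u'(1/2) = 0. Then u''(1/2) < 0 and u''(x) ≤ 0 for all x ∈ [0,1/2]; in particular u is concave on [0,1/2]. -/
open Real MeasureTheory

/-- The curvature of the graph `(x, u x)`. -/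
noncomputable def curv (u : ℝ → ℝ) (x : ℝ) : ℝ :=
  iteratedDeriv 2 u x / (1 + deriv u x ^ 2) ^ ((3:ℝ)/2)

/-- `u` satisfies the elastica equation
`(1/√(1+u'²)) (κ_u'/√(1+u'²))' + κ_u³/2 = 0` on the set `E`. -/
def ElasticaOn (u : ℝ → ℝ) (E : Set ℝ) : Prop :=
  ∀ x ∈ E,
    (1 / Real.sqrt (1 + deriv u x ^ 2)) *
        deriv (fun y => deriv (curv u) y / Real.sqrt (1 + deriv u y ^ 2)) x
      + (1/2) * curv u x ^ 3 = 0


open Set Filter Topology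


/-- constancy from zero derivative on the open interval plus global continuity -/
lemma aux_const_on {f : ℝ → ℝ} {a b : ℝ} (hab : a < b) (hc : Continuous f)
    (hd : ∀ x ∈ Set.Ioo a b, HasDerivAt f 0 x) :
    ∀ x ∈ Set.Icc a b, f x = f ((a + b) / 2) := by
  have hm : (a + b) / 2 ∈ Set.Ioo a b := ⟨by linarith, by linarith⟩
  have key : ∀ p q : ℝ, a < p → p ≤ q → q < b → f q = f p := by
    intro p q hap hpq hqb
    have := constant_of_has_deriv_right_zero (f := f) (a := p) (b := q)
      (hc.continuousOn) (fun x hx => (hd x ⟨lt_of_lt_of_le hap hx.1, lt_of_le_of_lt hx.2.le hqb⟩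
        |>.hasDerivWithinAt))
    exact this q ⟨hpq, le_refl q⟩
  have inner : ∀ x ∈ Set.Ioo a b, f x = f ((a + b) / 2) := by
    intro x hx
    rcases le_total x ((a + b) / 2) with h | h
    · exact (key x ((a+b)/2) hx.1 h hm.2).symm
    · exact key ((a+b)/2) x hm.1 h hx.2
  have ha : f a = f ((a + b) / 2) := by
    have h1 : Tendsto f (𝓝[>] a) (𝓝 (f a)) := (hc.continuousAt).continuousWithinAt
    have h2 : Tendsto f (𝓝[>] a) (𝓝 (f ((a + b) / 2))) := by
      have hmem : Set.Ioo a b ∈ 𝓝[>] a := Ioo_mem_nhdsGT_of_mem ⟨le_refl a, hab⟩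
      refine Tendsto.congr' ?_ tendsto_const_nhds
      filter_upwards [hmem] with y hy
      exact (inner y hy).symm
    exact tendsto_nhds_unique h1 h2
  have hb : f b = f ((a + b) / 2) := by
    have h1 : Tendsto f (𝓝[<] b) (𝓝 (f b)) := (hc.continuousAt).continuousWithinAt
    have h2 : Tendsto f (𝓝[<] b) (𝓝 (f ((a + b) / 2))) := by
      have hmem : Set.Ioo a b ∈ 𝓝[<] b := Ioo_mem_nhdsLT_of_mem ⟨hab, le_refl b⟩
      refine Tendsto.congr' ?_ tendsto_const_nhds
      filter_upwards [hmem] with y hy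
      exact (inner y hy).symm
    exact tendsto_nhds_unique h1 h2
  intro x hx
  rcases eq_or_lt_of_le hx.1 with h | hax
  · rw [← h]; exact ha
  rcases eq_or_lt_of_le hx.2 with h | hxb
  · rw [h]; exact hb
  · exact inner x ⟨hax, hxb⟩

/-- a continuous nonvanishing function on an order-connected set has constant sign -/
lemma aux_sign_pos {f : ℝ → ℝ} {s : Set ℝ} (hs : s.OrdConnected) (hc : Continuous f)
    (hne : ∀ x ∈ s, f x ≠ 0) {p : ℝ} (hp : p ∈ s) (hfp : 0 < f p) :
    ∀ x ∈ s, 0 < f x := by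
  intro x hx
  rcases lt_or_ge 0 (f x) with h | h
  · exact h
  have hfx : f x < 0 := lt_of_le_of_ne h (hne x hx)
  have hsub : Set.uIcc x p ⊆ s := hs.uIcc_subset hx hp
  have h0 : (0:ℝ) ∈ Set.uIcc (f x) (f p) := by
    rw [Set.mem_uIcc]; left; exact ⟨hfx.le, hfp.le⟩
  obtain ⟨z, hz, hz0⟩ := intermediate_value_uIcc (hc.continuousOn) h0
  exact absurd hz0 (hne z (hsub hz))

lemma aux_sign_dichotomy {f : ℝ → ℝ} {s : Set ℝ} (hs : s.OrdConnected) (hc : Continuous f)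
    (hne : ∀ x ∈ s, f x ≠ 0) {p : ℝ} (hp : p ∈ s) :
    (∀ x ∈ s, 0 < f x) ∨ (∀ x ∈ s, f x < 0) := by
  rcases lt_or_ge 0 (f p) with h | h
  · exact Or.inl (aux_sign_pos hs hc hne hp h)
  · right
    have hfp : 0 < (-f) p := by simp; exact lt_of_le_of_ne h (hne p hp)
    have := aux_sign_pos (f := -f) hs (hc.neg) (fun x hx => by simpa using hne x hx) hp hfp
    intro x hx
    have := this x hx
    simp at this; linarith

/-- nonvanishing to the right of a point where f = 0 but f' ≠ 0 -/
lemma aux_ne_zero_near {f : ℝ → ℝ} {x₀ d : ℝ} (hf : HasDerivAt f d x₀) (h0 : f x₀ = 0)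
    (hd : d ≠ 0) : ∃ δ > 0, ∀ x, x₀ < x → x < x₀ + δ → f x ≠ 0 := by
  have hslope := hasDerivAt_iff_tendsto_slope.mp hf
  have hev : ∀ᶠ y in 𝓝[≠] x₀, slope f x₀ y ≠ 0 := hslope.eventually_ne hd
  rw [eventually_nhdsWithin_iff] at hev
  rw [Metric.eventually_nhds_iff] at hev
  obtain ⟨ε, hε, hball⟩ := hev
  refine ⟨ε, hε, fun x hx1 hx2 => ?_⟩
  have hdist : dist x x₀ < ε := by
    rw [Real.dist_eq, abs_of_pos (by linarith)]; linarith
  have hne : x ∈ ({x₀}ᶜ : Set ℝ) := by simp; linarith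
  have := hball hdist hne
  rw [slope_def_field] at this
  intro hfx
  apply this
  rw [hfx, h0]; simp


variable {u : ℝ → ℝ}

lemma aux_pos (t : ℝ) : (0:ℝ) < 1 + t ^ 2 := by positivity

lemma aux_sqrt_pos (x : ℝ) : 0 < Real.sqrt (1 + deriv u x ^ 2) :=
  Real.sqrt_pos.mpr (aux_pos _)

lemma aux_sqrt_sq (x : ℝ) :
    Real.sqrt (1 + deriv u x ^ 2) ^ 2 = 1 + deriv u x ^ 2 :=
  Real.sq_sqrt (aux_pos _).le

lemma aux_rpow_eq (x : ℝ) :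
    (1 + deriv u x ^ 2) ^ ((3:ℝ)/2) = Real.sqrt (1 + deriv u x ^ 2) ^ 3 := by
  rw [Real.sqrt_eq_rpow, ← Real.rpow_natCast ((1 + deriv u x ^ 2) ^ ((1:ℝ)/2)) 3,
    ← Real.rpow_mul (aux_pos (deriv u x)).le]
  norm_num

lemma aux_id2 : iteratedDeriv 2 u = deriv (deriv u) := by
  rw [show (2:ℕ) = 1 + 1 from rfl, iteratedDeriv_succ, iteratedDeriv_one]

lemma aux_curv_eq (x : ℝ) :
    curv u x = deriv (deriv u) x / Real.sqrt (1 + deriv u x ^ 2) ^ 3 := by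
  rw [curv, aux_id2, aux_rpow_eq]

lemma aux_w_eq (x : ℝ) :
    deriv (deriv u) x = curv u x * Real.sqrt (1 + deriv u x ^ 2) ^ 3 := by
  rw [aux_curv_eq]
  field_simp

section Regularity
variable (hu : ContDiff ℝ 4 u)
include hu

lemma aux_cd3 : ContDiff ℝ 3 (deriv u) := by
  have h4 : (4 : WithTop ℕ∞) = 3 + 1 := by norm_num
  rw [h4] at hu
  exact (contDiff_succ_iff_deriv.mp hu).2.2

lemma aux_cd2 : ContDiff ℝ 2 (deriv (deriv u)) := by
  have h3 : (3 : WithTop ℕ∞) = 2 + 1 := by norm_num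
  have := aux_cd3 hu
  rw [h3] at this
  exact (contDiff_succ_iff_deriv.mp this).2.2

lemma aux_curv_cd : ContDiff ℝ 2 (curv u) := by
  have hc : curv u = fun x => deriv (deriv u) x / (1 + deriv u x ^ 2) ^ ((3:ℝ)/2) := by
    funext x; rw [curv, aux_id2]
  rw [hc]
  apply ContDiff.div (aux_cd2 hu)
  · rw [contDiff_iff_contDiffAt]
    intro x
    apply ContDiffAt.rpow_const_of_ne
    · exact (contDiffAt_const.add (((aux_cd3 hu).of_le (by norm_num)).contDiffAt.pow 2))
    · exact (aux_pos _).ne'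
  · intro x
    exact (Real.rpow_pos_of_pos (aux_pos _) _).ne'

lemma aux_curv'_cd : ContDiff ℝ 1 (deriv (curv u)) := by
  have h2 : (2 : WithTop ℕ∞) = 1 + 1 := by norm_num
  have := aux_curv_cd hu
  rw [h2] at this
  exact (contDiff_succ_iff_deriv.mp this).2.2

lemma aux_B_cd : ContDiff ℝ 1 (fun y => Real.sqrt (1 + deriv u y ^ 2)) := by
  rw [contDiff_iff_contDiffAt]
  intro x
  exact (Real.contDiffAt_sqrt (aux_pos (deriv u x)).ne').comp x
    (contDiffAt_const.add (((aux_cd3 hu).of_le (by norm_num)).contDiffAt.pow 2))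

lemma aux_g_cd :
    ContDiff ℝ 1 (fun y => deriv (curv u) y / Real.sqrt (1 + deriv u y ^ 2)) :=
  (aux_curv'_cd hu).div (aux_B_cd hu) (fun x => (aux_sqrt_pos x).ne')

/-- derivative of u' -/
lemma aux_hv (x : ℝ) :
    HasDerivAt (deriv u) (curv u x * Real.sqrt (1 + deriv u x ^ 2) ^ 3) x := by
  rw [← aux_w_eq]
  exact ((aux_cd3 hu).differentiable (by norm_num)).differentiableAt.hasDerivAt

/-- derivative of B = sqrt(1+u'^2) -/
lemma aux_hB (x : ℝ) :
    HasDerivAt (fun y => Real.sqrt (1 + deriv u y ^ 2))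
      (deriv u x * curv u x * Real.sqrt (1 + deriv u x ^ 2) ^ 2) x := by
  have hin : HasDerivAt (fun y => 1 + deriv u y ^ 2)
      (2 * deriv u x ^ 1 * (curv u x * Real.sqrt (1 + deriv u x ^ 2) ^ 3)) x := by
    have := (hasDerivAt_const x (1:ℝ)).add (((aux_hv hu x)).pow 2)
    convert this using 1
    case e'_4 => rfl
    case e'_5 => rfl
    case e'_8 => rfl
    push_cast
    ring
  have := (Real.hasDerivAt_sqrt (aux_pos (deriv u x)).ne').comp x hin
  convert this using 1
  case e'_4 => rfl
  case e'_5 => rfl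
  case e'_8 => rfl
  have hs := aux_sqrt_pos (u := u) x
  have hsq := aux_sqrt_sq (u := u) x
  field_simp
lemma aux_hκ (x : ℝ) :
    HasDerivAt (curv u)
      ((deriv (curv u) x / Real.sqrt (1 + deriv u x ^ 2)) * Real.sqrt (1 + deriv u x ^ 2)) x := by
  have h := (((aux_curv_cd hu).differentiable (by norm_num)).differentiableAt (x := x)).hasDerivAt
  convert h using 1
  case e'_4 => rfl
  case e'_5 => rfl
  field_simp

end Regularity


section Eqn
variable (hu : ContDiff ℝ 4 u) {E : Set ℝ} (heq : ElasticaOn u E)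
include hu heq

lemma aux_hg {x : ℝ} (hx : x ∈ E) :
    HasDerivAt (fun y => deriv (curv u) y / Real.sqrt (1 + deriv u y ^ 2))
      (-(curv u x ^ 3) / 2 * Real.sqrt (1 + deriv u x ^ 2)) x := by
  have hdiff := ((aux_g_cd hu).differentiable (by norm_num)).differentiableAt (x := x)
  have hval := heq x hx
  have hs := aux_sqrt_pos (u := u) x
  have : deriv (fun y => deriv (curv u) y / Real.sqrt (1 + deriv u y ^ 2)) x
      = -(curv u x ^ 3) / 2 * Real.sqrt (1 + deriv u x ^ 2) := by
    field_simp at hval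
    field_simp
    linarith
  rw [← this]
  exact hdiff.hasDerivAt

lemma aux_WX_deriv {x : ℝ} (hx : x ∈ E) :
    HasDerivAt (fun y => (curv u y ^ 2 -
        2 * (deriv (curv u) y / Real.sqrt (1 + deriv u y ^ 2)) * deriv u y) /
        Real.sqrt (1 + deriv u y ^ 2)) 0 x := by
  set g : ℝ → ℝ := fun y => deriv (curv u) y / Real.sqrt (1 + deriv u y ^ 2) with hg
  set B : ℝ → ℝ := fun y => Real.sqrt (1 + deriv u y ^ 2) with hB
  have hN : HasDerivAt (fun y => curv u y ^ 2 - 2 * g y * deriv u y)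
      (2 * curv u x ^ 1 * (g x * B x) -
        ((2 * (-(curv u x ^ 3) / 2 * B x)) * deriv u x +
          (2 * g x) * (curv u x * B x ^ 3))) x := by
    exact ((aux_hκ hu x).pow 2).sub
      ((((aux_hg hu heq hx)).const_mul 2).mul (aux_hv hu x))
  have hD := hN.div (aux_hB hu x) (aux_sqrt_pos (u := u) x).ne'
  convert hD using 1
  case e'_4 => rfl
  case e'_5 => rfl
  case e'_8 => rfl
  have hsq := aux_sqrt_sq (u := u) x
  rw [eq_comm, div_eq_zero_iff]
  left
  linear_combination (-2 * g x * curv u x * Real.sqrt (1 + deriv u x ^ 2) ^ 2) * hsq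

lemma aux_WY_deriv {x : ℝ} (hx : x ∈ E) :
    HasDerivAt (fun y => (2 * (deriv (curv u) y / Real.sqrt (1 + deriv u y ^ 2)) +
        curv u y ^ 2 * deriv u y) / Real.sqrt (1 + deriv u y ^ 2)) 0 x := by
  set g : ℝ → ℝ := fun y => deriv (curv u) y / Real.sqrt (1 + deriv u y ^ 2) with hg
  set B : ℝ → ℝ := fun y => Real.sqrt (1 + deriv u y ^ 2) with hB
  have hN : HasDerivAt (fun y => 2 * g y + curv u y ^ 2 * deriv u y)
      (2 * (-(curv u x ^ 3) / 2 * B x) +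
        ((2 * curv u x ^ 1 * (g x * B x)) * deriv u x +
          (curv u x ^ 2) * (curv u x * B x ^ 3))) x := by
    exact ((aux_hg hu heq hx).const_mul 2).add
      (((aux_hκ hu x).pow 2).mul (aux_hv hu x))
  have hD := hN.div (aux_hB hu x) (aux_sqrt_pos (u := u) x).ne'
  convert hD using 1
  case e'_4 => rfl
  case e'_5 => rfl
  case e'_8 => rfl
  have hsq := aux_sqrt_sq (u := u) x
  rw [eq_comm, div_eq_zero_iff]
  left
  linear_combination (curv u x ^ 3 * Real.sqrt (1 + deriv u x ^ 2) ^ 2) * hsq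

end Eqn

/-- If `u ∈ C⁴` solves the elastica equation on `(0,1/2)` with `u(0) = 0`, `u''(0) = 0`,
`u(1/2) > 0` and `u'(1/2) = 0`, then `u''(1/2) < 0`, `u'' ≤ 0` on `[0,1/2]`, and `u` is
concave on `[0,1/2]`. -/
theorem stmt_7 (u : ℝ → ℝ) (hu : ContDiff ℝ 4 u)
    (heq : ElasticaOn u (Set.Ioo 0 (1/2)))
    (h0 : u 0 = 0) (h2 : iteratedDeriv 2 u 0 = 0)
    (hpos : 0 < u (1/2)) (h1 : deriv u (1/2) = 0) :
    iteratedDeriv 2 u (1/2) < 0 ∧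
    (∀ x ∈ Set.Icc (0:ℝ) (1/2), iteratedDeriv 2 u x ≤ 0) ∧
    ConcaveOn ℝ (Set.Icc (0:ℝ) (1/2)) u := by
  have hs : ∀ x : ℝ, 0 < Real.sqrt (1 + deriv u x ^ 2) := fun x => aux_sqrt_pos x
  have hκcont : Continuous (curv u) := (aux_curv_cd hu).continuous
  have hGcont : Continuous (fun y => deriv (curv u) y / Real.sqrt (1 + deriv u y ^ 2)) :=
    (aux_g_cd hu).continuous
  have hvcont : Continuous (deriv u) := (aux_cd3 hu).continuous
  have hBcont : Continuous (fun y => Real.sqrt (1 + deriv u y ^ 2)) := (aux_B_cd hu).continuous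
  have h0mem : (0:ℝ) ∈ Set.Icc (0:ℝ) (1/2) := ⟨le_refl _, by norm_num⟩
  have hhalfmem : (1/2 : ℝ) ∈ Set.Icc (0:ℝ) (1/2) := ⟨by norm_num, le_refl _⟩
  -- conserved quantities
  obtain ⟨c, hc⟩ : ∃ c : ℝ, ∀ x ∈ Set.Icc (0:ℝ) (1/2),
      (curv u x ^ 2 - 2 * (deriv (curv u) x / Real.sqrt (1 + deriv u x ^ 2)) * deriv u x) /
        Real.sqrt (1 + deriv u x ^ 2) = c := by
    refine ⟨_, aux_const_on (by norm_num) ?_ (fun x hx => aux_WX_deriv hu heq hx)⟩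
    exact ((hκcont.pow 2).sub ((continuous_const.mul hGcont).mul hvcont)).div hBcont
      (fun x => (hs x).ne')
  obtain ⟨d, hd⟩ : ∃ d : ℝ, ∀ x ∈ Set.Icc (0:ℝ) (1/2),
      (2 * (deriv (curv u) x / Real.sqrt (1 + deriv u x ^ 2)) +
        curv u x ^ 2 * deriv u x) / Real.sqrt (1 + deriv u x ^ 2) = d := by
    refine ⟨_, aux_const_on (by norm_num) ?_ (fun x hx => aux_WY_deriv hu heq hx)⟩
    exact ((continuous_const.mul hGcont).add ((hκcont.pow 2).mul hvcont)).div hBcont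
      (fun x => (hs x).ne')
  -- the key pointwise identity
  have hid : ∀ x ∈ Set.Icc (0:ℝ) (1/2),
      c + d * deriv u x = curv u x ^ 2 * Real.sqrt (1 + deriv u x ^ 2) := by
    intro x hx
    rw [← hc x hx, ← hd x hx]
    have hsq := aux_sqrt_sq (u := u) x
    have hsx := hs x
    rw [div_mul_eq_mul_div, ← add_div, div_eq_iff hsx.ne']
    linear_combination (-(curv u x ^ 2)) * hsq
  have hκ0 : curv u 0 = 0 := by rw [curv, h2]; simp
  have hc0 : c + d * deriv u 0 = 0 := by
    have := hid 0 h0mem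
    rw [hκ0] at this
    simpa using this
  -- main claim : curv u < 0 on Ioc 0 (1/2)
  have hneg : ∀ x ∈ Set.Ioc (0:ℝ) (1/2), curv u x < 0 := by
    by_cases hd0 : d = 0
    · exfalso
      have hcz : c = 0 := by rw [hd0] at hc0; linarith
      have hκz : ∀ x ∈ Set.Icc (0:ℝ) (1/2), curv u x = 0 := by
        intro x hx
        have := hid x hx
        rw [hd0, hcz] at this
        have hsx := hs x
        have : curv u x ^ 2 = 0 := by
          by_contra h
          have h2' : 0 < curv u x ^ 2 := lt_of_le_of_ne (sq_nonneg _) (Ne.symm h)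
          nlinarith
        exact pow_eq_zero_iff (by norm_num) |>.mp this
      have hvconst := constant_of_has_deriv_right_zero (f := deriv u) (a := 0) (b := 1/2)
        (hvcont.continuousOn) (fun x hx => by
          have h := aux_hv hu x
          rw [hκz x ⟨hx.1, hx.2.le⟩] at h
          simpa using h.hasDerivWithinAt)
      have hv0 : deriv u 0 = 0 := by
        have := hvconst (1/2) hhalfmem
        rw [h1] at this
        exact this.symm
      have huconst := constant_of_has_deriv_right_zero (f := u) (a := 0) (b := 1/2)
        (hu.continuous.continuousOn) (fun x hx => by
          have h := ((hu.differentiable (by norm_num)).differentiableAt (x := x)).hasDerivAt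
          rw [hvconst x ⟨hx.1, hx.2.le⟩, hv0] at h
          exact h.hasDerivWithinAt)
      have := huconst (1/2) hhalfmem
      rw [h0] at this
      linarith
    · -- d ≠ 0
      have hG0 : deriv (curv u) 0 / Real.sqrt (1 + deriv u 0 ^ 2) ≠ 0 := by
        intro h
        apply hd0
        have := hd 0 h0mem
        rw [hκ0, h] at this
        simpa using this.symm
      have hκd0 := aux_hκ hu 0
      have hd0ne : (deriv (curv u) 0 / Real.sqrt (1 + deriv u 0 ^ 2)) *
          Real.sqrt (1 + deriv u 0 ^ 2) ≠ 0 := mul_ne_zero hG0 (hs 0).ne'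
      obtain ⟨δ, hδpos, hδ⟩ := aux_ne_zero_near hκd0 hκ0 hd0ne
      have hZempty : {x : ℝ | x ∈ Set.Ioc (0:ℝ) (1/2) ∧ curv u x = 0} = ∅ := by
        by_contra hne
        have hZne : {x : ℝ | x ∈ Set.Ioc (0:ℝ) (1/2) ∧ curv u x = 0}.Nonempty :=
          Set.nonempty_iff_ne_empty.mpr hne
        have hbdd : BddBelow {x : ℝ | x ∈ Set.Ioc (0:ℝ) (1/2) ∧ curv u x = 0} :=
          ⟨0, fun z hz => hz.1.1.le⟩
        set x₂ := sInf {x : ℝ | x ∈ Set.Ioc (0:ℝ) (1/2) ∧ curv u x = 0} with hx₂def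
        have hδle : ∀ z ∈ {x : ℝ | x ∈ Set.Ioc (0:ℝ) (1/2) ∧ curv u x = 0}, δ ≤ z := by
          intro z hz
          by_contra h
          push_neg at h
          exact hδ z hz.1.1 (by linarith) hz.2
        have hx₂δ : δ ≤ x₂ := le_csInf hZne hδle
        have hx₂pos : 0 < x₂ := lt_of_lt_of_le hδpos hx₂δ
        have hκx₂ : curv u x₂ = 0 := by
          have hcl : closure {x : ℝ | x ∈ Set.Ioc (0:ℝ) (1/2) ∧ curv u x = 0} ⊆
              {x : ℝ | curv u x = 0} :=
            closure_minimal (fun z hz => hz.2) (isClosed_eq hκcont continuous_const)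
          exact hcl (csInf_mem_closure hZne hbdd)
        have hx₂le : x₂ ≤ 1/2 := by
          obtain ⟨z, hz⟩ := hZne
          exact le_trans (csInf_le hbdd hz) hz.1.2
        have hnozero : ∀ y ∈ Set.Ioo (0:ℝ) x₂, curv u y ≠ 0 := by
          intro y hy hy0
          have hyZ : y ∈ {x : ℝ | x ∈ Set.Ioc (0:ℝ) (1/2) ∧ curv u x = 0} :=
            ⟨⟨hy.1, le_trans hy.2.le hx₂le⟩, hy0⟩
          exact absurd (csInf_le hbdd hyZ) (not_le.mpr hy.2)
        have hpmem : x₂/2 ∈ Set.Ioo (0:ℝ) x₂ := ⟨by linarith, by linarith⟩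
        have hvne : deriv u 0 ≠ deriv u x₂ := by
          rcases aux_sign_dichotomy Set.ordConnected_Ioo hκcont hnozero hpmem with hsgn | hsgn
          · refine ne_of_lt (strictMonoOn_of_deriv_pos (convex_Icc 0 x₂)
              hvcont.continuousOn (fun y hy => ?_) ⟨le_refl _, hx₂pos.le⟩
              ⟨hx₂pos.le, le_refl _⟩ hx₂pos)
            rw [interior_Icc] at hy
            rw [aux_w_eq]
            exact mul_pos (hsgn y hy) (pow_pos (hs y) 3)
          · refine ne_of_gt (strictAntiOn_of_deriv_neg (convex_Icc 0 x₂)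
              hvcont.continuousOn (fun y hy => ?_) ⟨le_refl _, hx₂pos.le⟩
              ⟨hx₂pos.le, le_refl _⟩ hx₂pos)
            rw [interior_Icc] at hy
            rw [aux_w_eq]
            exact mul_neg_of_neg_of_pos (hsgn y hy) (pow_pos (hs y) 3)
        apply hvne
        have e2 := hid x₂ ⟨hx₂pos.le, hx₂le⟩
        rw [hκx₂] at e2
        simp only [ne_eq, OfNat.ofNat_ne_zero, not_false_eq_true, zero_pow, zero_mul] at e2
        have : d * deriv u 0 = d * deriv u x₂ := by
          have h2' : (0:ℝ)^2 * Real.sqrt (1 + deriv u x₂ ^2) = 0 := by simp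
          nlinarith [hc0, e2]
        exact mul_left_cancel₀ hd0 this
      have hnz : ∀ x ∈ Set.Ioc (0:ℝ) (1/2), curv u x ≠ 0 := by
        intro x hx h
        have : x ∈ {x : ℝ | x ∈ Set.Ioc (0:ℝ) (1/2) ∧ curv u x = 0} := ⟨hx, h⟩
        rw [hZempty] at this
        exact this
      have hhalfIoc : (1/2:ℝ) ∈ Set.Ioc (0:ℝ) (1/2) := ⟨by norm_num, le_refl _⟩
      rcases aux_sign_dichotomy Set.ordConnected_Ioc hκcont hnz hhalfIoc with hsgn | hsgn
      · exfalso
        have hmono := strictMonoOn_of_deriv_pos (convex_Icc (0:ℝ) (1/2))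
          hvcont.continuousOn (fun y hy => by
            rw [interior_Icc] at hy
            rw [aux_w_eq]
            exact mul_pos (hsgn y ⟨hy.1, hy.2.le⟩) (pow_pos (hs y) 3))
        have hvneg : ∀ x ∈ Set.Ico (0:ℝ) (1/2), deriv u x < 0 := by
          intro x hx
          have := hmono ⟨hx.1, hx.2.le⟩ hhalfmem hx.2
          rwa [h1] at this
        have hanti := strictAntiOn_of_deriv_neg (convex_Icc (0:ℝ) (1/2))
          (hu.continuous.continuousOn) (fun y hy => by
            rw [interior_Icc] at hy
            exact hvneg y ⟨hy.1.le, hy.2⟩)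
        have := hanti h0mem hhalfmem (by norm_num)
        rw [h0] at this
        linarith
      · exact hsgn
  -- conclusions
  have hκhalf := hneg (1/2) ⟨by norm_num, le_refl _⟩
  refine ⟨?_, ?_, ?_⟩
  · rw [aux_id2, aux_w_eq]
    exact mul_neg_of_neg_of_pos hκhalf (pow_pos (hs (1/2)) 3)
  · intro x hx
    rw [aux_id2, aux_w_eq]
    rcases eq_or_lt_of_le hx.1 with h | h
    · rw [← h, hκ0]
      simp
    · exact le_of_lt (mul_neg_of_neg_of_pos (hneg x ⟨h, hx.2⟩) (pow_pos (hs x) 3))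
  · apply concaveOn_of_deriv2_nonpos (convex_Icc _ _) (hu.continuous.continuousOn)
      ((hu.differentiable (by norm_num)).differentiableOn)
      (((aux_cd3 hu).differentiable (by norm_num)).differentiableOn)
    intro x hx
    rw [interior_Icc] at hx
    have hit : deriv^[2] u x = deriv (deriv u) x := rfl
    rw [hit, aux_w_eq]
    exact le_of_lt (mul_neg_of_neg_of_pos (hneg x ⟨hx.1, hx.2.le⟩) (pow_pos (hs x) 3))
end

section
/- The function α ↦ J(α)/(2 I(α)) is strictly increasing on (0,∞), where I(α) = ∫₀^α (√α/√(α−s)) (1+s²)^{-5/4} ds and J(α) = ∫₀^α (√α/√(α−s)) · s (1+s²)^{-5/4} ds. -/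
open Real MeasureTheory

/-- `I(α) = ∫₀^α (√α/√(α−s)) (1+s²)^{-5/4} ds`. -/
noncomputable def Ifun (α : ℝ) : ℝ :=
  ∫ s in (0:ℝ)..α, (Real.sqrt α / Real.sqrt (α - s)) * (1 + s ^ 2) ^ (-(5:ℝ)/4)

/-- `J(α) = ∫₀^α (√α/√(α−s)) · s (1+s²)^{-5/4} ds`. -/
noncomputable def Jfun (α : ℝ) : ℝ :=
  ∫ s in (0:ℝ)..α, (Real.sqrt α / Real.sqrt (α - s)) * (s * (1 + s ^ 2) ^ (-(5:ℝ)/4))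

noncomputable def Phi (α : ℝ) : ℝ := ∫ r in (0:ℝ)..α, Real.sqrt r * (1 + r ^ 2) ^ (-(1:ℝ)/4)

noncomputable def Gaux (α : ℝ) : ℝ := Real.sqrt α * (1 + α ^ 2) ^ ((3:ℝ)/4) / Phi α - α

open Set intervalIntegral


-- from t1.lean
lemma phi_cont : Continuous fun r : ℝ => Real.sqrt r * (1 + r ^ 2) ^ (-(1:ℝ)/4) := by
  apply Real.continuous_sqrt.mul
  apply Continuous.rpow_const (by continuity)
  intro x; left; positivity

lemma phi_hasDeriv (α : ℝ) : HasDerivAt Phi (Real.sqrt α * (1 + α ^ 2) ^ (-(1:ℝ)/4)) α := by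
  exact (phi_cont.integral_hasStrictDerivAt 0 α).hasDerivAt

lemma phi_pos {α : ℝ} (hα : 0 < α) : 0 < Phi α := by
  apply intervalIntegral.intervalIntegral_pos_of_pos_on
    (phi_cont.intervalIntegrable 0 α)
  · intro x hx
    have : 0 < Real.sqrt x := Real.sqrt_pos.2 hx.1
    positivity
  · exact hα

lemma phi_le {α : ℝ} (hα : 0 < α) : Phi α ≤ 2/3 * α ^ ((3:ℝ)/2) := by
  have h1 : Phi α ≤ ∫ r in (0:ℝ)..α, r ^ ((1:ℝ)/2) := by
    apply intervalIntegral.integral_mono_on hα.le (phi_cont.intervalIntegrable 0 α)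
      (intervalIntegrable_rpow' (by norm_num))
    intro x hx
    rw [← Real.sqrt_eq_rpow]
    nth_rewrite 2 [← mul_one (Real.sqrt x)]
    apply mul_le_mul_of_nonneg_left _ (Real.sqrt_nonneg x)
    apply Real.rpow_le_one_of_one_le_of_nonpos
    · nlinarith [hx.1]
    · norm_num
  have h2 : ∫ r in (0:ℝ)..α, r ^ ((1:ℝ)/2) = 2/3 * α ^ ((3:ℝ)/2) := by
    rw [integral_rpow (Or.inl (by norm_num))]
    rw [Real.zero_rpow (by norm_num)]
    norm_num
    rw [div_eq_mul_inv, mul_comm]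
    norm_num
  linarith

-- from t2.lean
lemma integrable_core {α : ℝ} (hα : 0 < α) {h : ℝ → ℝ} (hh : Continuous h) :
    IntervalIntegrable (fun s => (α - s) ^ (-(1:ℝ)/2) * h s) volume 0 α := by
  have base : IntervalIntegrable (fun x : ℝ => x ^ (-(1:ℝ)/2)) volume 0 α :=
    intervalIntegrable_rpow' (by norm_num)
  have comp := base.comp_sub_left α
  simp only [sub_zero, sub_self] at comp
  exact (comp.symm).mul_continuousOn hh.continuousOn

lemma integrand_eq {α : ℝ} (hα : 0 < α) (h : ℝ → ℝ) :
    ∀ s ∈ Set.uIcc (0:ℝ) α,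
      Real.sqrt α / Real.sqrt (α - s) * h s = Real.sqrt α * ((α - s) ^ (-(1:ℝ)/2) * h s) := by
  intro s hs
  rw [Set.uIcc_of_le hα.le] at hs
  rcases eq_or_lt_of_le hs.2 with h2 | h2
  · subst h2; simp [Real.sqrt_zero, Real.zero_rpow (by norm_num : (-(1:ℝ)/2) ≠ 0)]
  · have hpos : 0 < α - s := by linarith
    rw [Real.sqrt_eq_rpow (α - s), neg_div, Real.rpow_neg hpos.le, div_eq_mul_inv, mul_assoc]

-- from t3.lean
-- derivative of F₁ s = -(2 √(α-s) (1+s²)^{-1/4})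
lemma F1_deriv {α s : ℝ} (hs : s ∈ Set.Ioo 0 α) :
    HasDerivAt (fun s => -(2 * Real.sqrt (α - s) * (1 + s ^ 2) ^ (-(1:ℝ)/4)))
      ((α - s) ^ (-(1:ℝ)/2) * ((1 + α * s) * (1 + s ^ 2) ^ (-(5:ℝ)/4))) s := by
  have hpos : 0 < α - s := by linarith [hs.2]
  have hP : (0:ℝ) < 1 + s ^ 2 := by positivity
  have h1 : HasDerivAt (fun s : ℝ => α - s) (-1) s := (hasDerivAt_id s).const_sub α
  have hsqrt : HasDerivAt (fun s => Real.sqrt (α - s)) (1 / (2 * Real.sqrt (α - s)) * (-1)) s :=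
    (Real.hasDerivAt_sqrt hpos.ne').comp s h1
  have hB : HasDerivAt (fun s : ℝ => 1 + s ^ 2) (2 * s) s := by
    simpa using ((hasDerivAt_pow 2 s).const_add 1)
  have hQ : HasDerivAt (fun s : ℝ => (1 + s ^ 2) ^ (-(1:ℝ)/4))
      (2 * s * (-(1:ℝ)/4) * (1 + s ^ 2) ^ (-(1:ℝ)/4 - 1)) s :=
    hB.rpow_const (Or.inl hP.ne')
  have hF := (((hsqrt.const_mul 2).mul hQ).neg)
  refine hF.congr_deriv ?_
  symm
  have hA : 0 < Real.sqrt (α - s) := Real.sqrt_pos.2 hpos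
  have hA2 : Real.sqrt (α - s) ^ 2 = α - s := Real.sq_sqrt hpos.le
  have e1 : (α - s) ^ (-(1:ℝ)/2) = (Real.sqrt (α - s))⁻¹ := by
    rw [Real.sqrt_eq_rpow (α - s), neg_div, Real.rpow_neg hpos.le]
  have e2 : (1 + s ^ 2) ^ (-(5:ℝ)/4) = (1 + s ^ 2) ^ (-(1:ℝ)/4) / (1 + s ^ 2) := by
    rw [show (-(5:ℝ)/4) = (-(1:ℝ)/4) - 1 by norm_num, Real.rpow_sub hP, Real.rpow_one]
  have e3 : (1 + s ^ 2) ^ (-(1:ℝ)/4 - 1) = (1 + s ^ 2) ^ (-(1:ℝ)/4) / (1 + s ^ 2) := by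
    rw [Real.rpow_sub hP, Real.rpow_one]
  rw [e1, e2, e3]
  set A := Real.sqrt (α - s)
  set Q := (1 + s ^ 2) ^ (-(1:ℝ)/4)
  field_simp
  linear_combination (-4 * s * Q) * hA2

-- from t4.lean
lemma F2_deriv {α s : ℝ} (hs : s ∈ Set.Ioo 0 α) :
    HasDerivAt (fun s => -(2 * s * Real.sqrt (α - s) * (1 + s ^ 2) ^ (-(1:ℝ)/4) / (1 + α * s)))
      ((α - s) ^ (-(1:ℝ)/2) * (s * (1 + s ^ 2) ^ (-(5:ℝ)/4))
        - 2 * Real.sqrt (α - s) * (1 + s ^ 2) ^ (-(1:ℝ)/4) / (1 + α * s) ^ 2) s := by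
  have hspos := hs.1
  have hpos : 0 < α - s := by linarith [hs.2]
  have hαpos : 0 < α := lt_trans hs.1 hs.2
  have hC : (0:ℝ) < 1 + α * s := by positivity
  have hP : (0:ℝ) < 1 + s ^ 2 := by positivity
  have h1 : HasDerivAt (fun s : ℝ => α - s) (-1) s := (hasDerivAt_id s).const_sub α
  have hsqrt : HasDerivAt (fun s => Real.sqrt (α - s)) (1 / (2 * Real.sqrt (α - s)) * (-1)) s :=
    (Real.hasDerivAt_sqrt hpos.ne').comp s h1
  have hB : HasDerivAt (fun s : ℝ => 1 + s ^ 2) (2 * s) s := by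
    simpa using ((hasDerivAt_pow 2 s).const_add 1)
  have hQ : HasDerivAt (fun s : ℝ => (1 + s ^ 2) ^ (-(1:ℝ)/4))
      (2 * s * (-(1:ℝ)/4) * (1 + s ^ 2) ^ (-(1:ℝ)/4 - 1)) s :=
    hB.rpow_const (Or.inl hP.ne')
  have h2s : HasDerivAt (fun s : ℝ => 2 * s) 2 s := by simpa using (hasDerivAt_id s).const_mul 2
  have hCd : HasDerivAt (fun s : ℝ => 1 + α * s) α s := by
    simpa using ((hasDerivAt_id s).const_mul α).const_add 1
  have hF := ((((h2s.mul hsqrt).mul hQ).div hCd hC.ne').neg)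
  refine hF.congr_deriv ?_
  symm
  simp only [Pi.mul_apply]
  have hA : 0 < Real.sqrt (α - s) := Real.sqrt_pos.2 hpos
  have hA2 : Real.sqrt (α - s) ^ 2 = α - s := Real.sq_sqrt hpos.le
  have e1 : (α - s) ^ (-(1:ℝ)/2) = (Real.sqrt (α - s))⁻¹ := by
    rw [Real.sqrt_eq_rpow (α - s), neg_div, Real.rpow_neg hpos.le]
  have e2 : (1 + s ^ 2) ^ (-(5:ℝ)/4) = (1 + s ^ 2) ^ (-(1:ℝ)/4) / (1 + s ^ 2) := by
    rw [show (-(5:ℝ)/4) = (-(1:ℝ)/4) - 1 by norm_num, Real.rpow_sub hP, Real.rpow_one]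
  have e3 : (1 + s ^ 2) ^ (-(1:ℝ)/4 - 1) = (1 + s ^ 2) ^ (-(1:ℝ)/4) / (1 + s ^ 2) := by
    rw [Real.rpow_sub hP, Real.rpow_one]
  rw [e1, e2, e3]
  set A := Real.sqrt (α - s)
  set Q := (1 + s ^ 2) ^ (-(1:ℝ)/4)
  field_simp
  linear_combination (-(4 * Q * s ^ 2 * (1 + α * s))) * hA2

-- from t5.lean
lemma cont_I : Continuous fun s : ℝ => (1 + s ^ 2) ^ (-(5:ℝ)/4) := by
  apply Continuous.rpow_const (by continuity); intro x; left; positivity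

lemma cont_J : Continuous fun s : ℝ => s * (1 + s ^ 2) ^ (-(5:ℝ)/4) :=
  continuous_id.mul cont_I

lemma key1 {α : ℝ} (hα : 0 < α) :
    (∫ s in (0:ℝ)..α, (α - s) ^ (-(1:ℝ)/2) * ((1 + α * s) * (1 + s ^ 2) ^ (-(5:ℝ)/4)))
      = 2 * Real.sqrt α := by
  have hcont : ContinuousOn (fun s => -(2 * Real.sqrt (α - s) * (1 + s ^ 2) ^ (-(1:ℝ)/4)))
      (Set.Icc 0 α) := by
    apply Continuous.continuousOn
    apply Continuous.neg
    apply Continuous.mul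
    · exact (continuous_const.mul (Real.continuous_sqrt.comp (continuous_const.sub continuous_id)))
    · apply Continuous.rpow_const (by continuity); intro x; left; positivity
  have hint : IntervalIntegrable
      (fun s => (α - s) ^ (-(1:ℝ)/2) * ((1 + α * s) * (1 + s ^ 2) ^ (-(5:ℝ)/4))) volume 0 α :=
    integrable_core hα (by
      apply Continuous.mul
      · exact continuous_const.add (continuous_const.mul continuous_id)
      · exact cont_I)
  rw [intervalIntegral.integral_eq_sub_of_hasDeriv_right_of_le hα.le hcont
    (fun x hx => (F1_deriv hx).hasDerivWithinAt) hint]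
  simp [Real.sqrt_zero, sub_self, Real.one_rpow]

-- from t6.lean
lemma contB {α : ℝ} (hα : 0 < α) :
    ContinuousOn (fun s : ℝ => 2 * Real.sqrt (α - s) * (1 + s ^ 2) ^ (-(1:ℝ)/4) / (1 + α * s) ^ 2)
      (Set.Icc 0 α) := by
  apply ContinuousOn.div
  · apply Continuous.continuousOn
    exact ((continuous_const.mul (Real.continuous_sqrt.comp
      (continuous_const.sub continuous_id))).mul
      (Continuous.rpow_const (by continuity) (fun x => Or.inl (by positivity))))
  · fun_prop
  · intro x hx
    have : (0:ℝ) < 1 + α * x := by nlinarith [hx.1, hα]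
    positivity

lemma intB {α : ℝ} (hα : 0 < α) :
    IntervalIntegrable
      (fun s : ℝ => 2 * Real.sqrt (α - s) * (1 + s ^ 2) ^ (-(1:ℝ)/4) / (1 + α * s) ^ 2)
      volume 0 α := by
  apply ContinuousOn.intervalIntegrable
  rw [Set.uIcc_of_le hα.le]; exact contB hα

lemma key2 {α : ℝ} (hα : 0 < α) :
    (∫ s in (0:ℝ)..α, (α - s) ^ (-(1:ℝ)/2) * (s * (1 + s ^ 2) ^ (-(5:ℝ)/4)))
      = ∫ s in (0:ℝ)..α, 2 * Real.sqrt (α - s) * (1 + s ^ 2) ^ (-(1:ℝ)/4) / (1 + α * s) ^ 2 := by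
  have hcont : ContinuousOn
      (fun s => -(2 * s * Real.sqrt (α - s) * (1 + s ^ 2) ^ (-(1:ℝ)/4) / (1 + α * s)))
      (Set.Icc 0 α) := by
    apply ContinuousOn.neg
    apply ContinuousOn.div
    · apply Continuous.continuousOn
      exact (((continuous_const.mul continuous_id).mul (Real.continuous_sqrt.comp
        (continuous_const.sub continuous_id))).mul
        (Continuous.rpow_const (by continuity) (fun x => Or.inl (by positivity))))
    · fun_prop
    · intro x hx
      have : (0:ℝ) < 1 + α * x := by nlinarith [hx.1, hα]
      positivity
  have h1 : IntervalIntegrable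
      (fun s => (α - s) ^ (-(1:ℝ)/2) * (s * (1 + s ^ 2) ^ (-(5:ℝ)/4))) volume 0 α :=
    integrable_core hα cont_J
  have hsub := intervalIntegral.integral_eq_sub_of_hasDeriv_right_of_le hα.le hcont
    (fun x hx => (F2_deriv hx).hasDerivWithinAt) (h1.sub (intB hα))
  rw [intervalIntegral.integral_sub h1 (intB hα)] at hsub
  simp only [Real.sqrt_zero, sub_self, mul_zero, zero_mul, mul_one, zero_div, neg_zero,
    zero_mul, mul_zero] at hsub
  have : (-(2 * (α:ℝ) * Real.sqrt (α - α) * (1 + α ^ 2) ^ (-(1:ℝ)/4) / (1 + α * α))) = 0 := by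
    simp [sub_self, Real.sqrt_zero]
  linarith [hsub]

-- from t7.lean
lemma key3 {α : ℝ} (hα : 0 < α) :
    (∫ s in (0:ℝ)..α, 2 * Real.sqrt (α - s) * (1 + s ^ 2) ^ (-(1:ℝ)/4) / (1 + α * s) ^ 2)
      = 2 * (1 + α ^ 2) ^ (-(3:ℝ)/4) * Phi α := by
  -- substitution r = (α - s)/(1 + α s)
  have hC : ∀ x ∈ Set.uIcc (0:ℝ) α, (0:ℝ) < 1 + α * x := by
    intro x hx
    rw [Set.uIcc_of_le hα.le] at hx
    nlinarith [hx.1, hα]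
  have hderiv : ∀ x ∈ Set.uIcc (0:ℝ) α,
      HasDerivAt (fun s => (α - s) / (1 + α * s)) (-((1 + α ^ 2) / (1 + α * x) ^ 2)) x := by
    intro x hx
    have hCx := hC x hx
    have h1 : HasDerivAt (fun s : ℝ => α - s) (-1) x := (hasDerivAt_id x).const_sub α
    have h2 : HasDerivAt (fun s : ℝ => 1 + α * s) α x := by
      simpa using ((hasDerivAt_id x).const_mul α).const_add 1
    have := h1.div h2 hCx.ne'
    refine this.congr_deriv ?_
    symm
    field_simp
    ring
  have hcont' : ContinuousOn (fun x : ℝ => -((1 + α ^ 2) / (1 + α * x) ^ 2))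
      (Set.uIcc 0 α) := by
    apply ContinuousOn.neg
    apply ContinuousOn.div (by fun_prop) (by fun_prop)
    intro x hx; exact pow_ne_zero 2 (hC x hx).ne'
  have hsub := intervalIntegral.integral_comp_smul_deriv hderiv hcont' phi_cont
  -- RHS endpoints: f 0 = α, f α = 0
  have hf0 : (α - 0) / (1 + α * 0) = α := by norm_num
  have hfα : (α - α) / (1 + α * α) = 0 := by simp
  rw [hf0, hfα] at hsub
  have hsymm : (∫ x in α..(0:ℝ), Real.sqrt x * (1 + x ^ 2) ^ (-(1:ℝ)/4)) = - Phi α := by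
    rw [intervalIntegral.integral_symm]; rfl
  rw [hsymm] at hsub
  -- pointwise identity on uIcc
  have hpt : ∀ x ∈ Set.uIcc (0:ℝ) α,
      (-((1 + α ^ 2) / (1 + α * x) ^ 2)) •
          ((fun r => Real.sqrt r * (1 + r ^ 2) ^ (-(1:ℝ)/4)) ((α - x) / (1 + α * x)))
        = -((1 + α ^ 2) ^ ((3:ℝ)/4) *
            (2 * Real.sqrt (α - x) * (1 + x ^ 2) ^ (-(1:ℝ)/4) / (1 + α * x) ^ 2) / 2) := by
    intro x hx
    have hCx := hC x hx
    rw [Set.uIcc_of_le hα.le] at hx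
    have hαx : 0 ≤ α - x := by linarith [hx.2]
    have hP : (0:ℝ) < 1 + x ^ 2 := by positivity
    have hA2 : (0:ℝ) < 1 + α ^ 2 := by positivity
    simp only [smul_eq_mul]
    have e0 : (1 : ℝ) + ((α - x) / (1 + α * x)) ^ 2
        = (1 + α ^ 2) * (1 + x ^ 2) / (1 + α * x) ^ 2 := by
      field_simp; ring
    rw [e0]
    have e1 : Real.sqrt ((α - x) / (1 + α * x))
        = Real.sqrt (α - x) / Real.sqrt (1 + α * x) := Real.sqrt_div hαx _
    have e2 : ((1 + α ^ 2) * (1 + x ^ 2) / (1 + α * x) ^ 2) ^ (-(1:ℝ)/4)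
        = (1 + α ^ 2) ^ (-(1:ℝ)/4) * (1 + x ^ 2) ^ (-(1:ℝ)/4) / ((1 + α * x) ^ 2) ^ (-(1:ℝ)/4) := by
      rw [Real.div_rpow (by positivity) (by positivity), Real.mul_rpow hA2.le hP.le]
    have e3 : ((1 + α * x) ^ 2) ^ (-(1:ℝ)/4) = (Real.sqrt (1 + α * x))⁻¹ := by
      rw [← Real.rpow_natCast (1 + α * x) 2, ← Real.rpow_mul hCx.le, Real.sqrt_eq_rpow,
        show ((2:ℕ):ℝ) * (-(1:ℝ)/4) = -(1/(2:ℝ)) by norm_num, Real.rpow_neg hCx.le]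
    have e4 : (1 + α ^ 2) ^ ((3:ℝ)/4) = (1 + α ^ 2) * (1 + α ^ 2) ^ (-(1:ℝ)/4) := by
      rw [show ((3:ℝ)/4) = 1 + (-(1:ℝ)/4) by norm_num, Real.rpow_add hA2, Real.rpow_one]
    rw [e1, e2, e3, e4]
    have hsC : (0:ℝ) < Real.sqrt (1 + α * x) := Real.sqrt_pos.2 hCx
    have hsC2 : Real.sqrt (1 + α * x) ^ 2 = 1 + α * x := Real.sq_sqrt hCx.le
    field_simp
  have hcongr := intervalIntegral.integral_congr (μ := volume) hpt
  simp only [Function.comp] at hsub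
  rw [hcongr] at hsub
  have heq : (fun x => -((1 + α ^ 2) ^ ((3:ℝ)/4) *
        (2 * Real.sqrt (α - x) * (1 + x ^ 2) ^ (-(1:ℝ)/4) / (1 + α * x) ^ 2) / 2))
      = fun x => (-((1 + α ^ 2) ^ ((3:ℝ)/4) / 2)) *
        (2 * Real.sqrt (α - x) * (1 + x ^ 2) ^ (-(1:ℝ)/4) / (1 + α * x) ^ 2) := by
    funext x; ring
  rw [heq, intervalIntegral.integral_const_mul] at hsub
  have hA2 : (0:ℝ) < 1 + α ^ 2 := by positivity
  have h34 : (0:ℝ) < (1 + α ^ 2) ^ ((3:ℝ)/4) := Real.rpow_pos_of_pos hA2 _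
  have e5 : (1 + α ^ 2) ^ (-(3:ℝ)/4) = ((1 + α ^ 2) ^ ((3:ℝ)/4))⁻¹ := by
    rw [neg_div, Real.rpow_neg hA2.le]
  have hX : (1 + α ^ 2) ^ ((3:ℝ)/4) *
      (∫ s in (0:ℝ)..α, 2 * Real.sqrt (α - s) * (1 + s ^ 2) ^ (-(1:ℝ)/4) / (1 + α * s) ^ 2)
      = 2 * Phi α := by linarith
  rw [e5]
  field_simp
  simp only [neg_div] at hX
  linear_combination hX

-- from t8.lean
lemma Hneg {α : ℝ} (hα : 0 < α) :
    (1 + 4*α^2) * Phi α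
      < 2 * Real.sqrt α * (1 + α^2) ^ ((1:ℝ)/4)
        * (α * ((1 + α^2) ^ ((1:ℝ)/4)) ^ 2 + Phi α ^ 2) := by
  set Φ := Phi α with hΦ
  set sa := Real.sqrt α with hsa
  set t := (1 + α^2) ^ ((1:ℝ)/4) with ht
  have hsapos : 0 < sa := Real.sqrt_pos.2 hα
  have hsa2 : sa ^ 2 = α := Real.sq_sqrt hα.le
  have hK : (0:ℝ) < 1 + α^2 := by positivity
  have htpos : 0 < t := Real.rpow_pos_of_pos hK _
  have ht4 : t ^ 4 = 1 + α ^ 2 := by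
    rw [ht, ← Real.rpow_natCast ((1 + α^2) ^ ((1:ℝ)/4)) 4, ← Real.rpow_mul hK.le]
    norm_num
  have ht1 : 1 ≤ t := by
    have h := Real.rpow_le_rpow (by norm_num : (0:ℝ) ≤ 1)
      (by nlinarith : (1:ℝ) ≤ 1 + α^2) (by norm_num : (0:ℝ) ≤ 1/4)
    rwa [Real.one_rpow] at h
  have hΦpos : 0 < Φ := phi_pos hα
  have hΦle : Φ ≤ 2/3 * (α * sa) := by
    have := phi_le hα
    have e : α ^ ((3:ℝ)/2) = α * sa := by
      rw [hsa, Real.sqrt_eq_rpow, show ((3:ℝ)/2) = 1 + 1/(2:ℝ) by norm_num,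
        Real.rpow_add hα, Real.rpow_one]
    rw [e] at this; linarith
  rcases le_or_gt (α^2) (1/8) with hc | hc
  · have ht3 : 1 ≤ t ^ 3 := by nlinarith [ht1, htpos, sq_nonneg (t-1), sq_nonneg t]
    have h1 : (1 + 4*α^2) * Φ ≤ (1 + 4*α^2) * (2/3 * (α * sa)) := by nlinarith
    have h2 : (1 + 4*α^2) * (2/3 * (α * sa)) < 2 * sa * t * (α * t^2) := by
      nlinarith [mul_pos hα hsapos, mul_pos (mul_pos hα hsapos) htpos]
    nlinarith [mul_pos (mul_pos (mul_pos two_pos hsapos) htpos) (mul_pos hΦpos hΦpos)]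
  · have hsq := sq_nonneg ((1 + 4*α^2) - 4 * sa * t * Φ)
    have e2 : 16*sa^2*t^2*Φ^2 = 16*α*t^2*Φ^2 := by rw [hsa2]
    have key : 8 * sa * t * Φ * (1 + 4*α^2) ≤ (1 + 4*α^2)^2 + 16 * α * t^2 * Φ^2 := by
      nlinarith [hsq, e2]
    have hdisc : (1 + 4*α^2)^2 < 16*α^2*(1+α^2) := by nlinarith [hc]
    have h8 : (0:ℝ) < 8 * sa * t := by positivity
    have e : 8*sa*t * (2*sa*t*(α*t^2 + Φ^2)) = 16*α^2*t^4 + 16*α*t^2*Φ^2 := by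
      linear_combination (16*t^2*(α*t^2 + Φ^2)) * hsa2
    have ht4' : 16*α^2*(1+α^2) = 16*α^2*t^4 := by rw [ht4]
    have hfin : 8*sa*t * ((1 + 4*α^2) * Φ) < 8*sa*t * (2*sa*t*(α*t^2 + Φ^2)) := by
      rw [e]; nlinarith [key, hdisc, ht4']
    exact lt_of_mul_lt_mul_left hfin h8.le

-- from t9.lean
lemma Gaux_anti : StrictAntiOn Gaux (Set.Ioi (0:ℝ)) := by
  have hderiv : ∀ α ∈ Set.Ioi (0:ℝ), HasDerivAt Gaux
      (((1/(2 * Real.sqrt α) * (1 + α^2) ^ ((3:ℝ)/4)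
          + Real.sqrt α * (2*α * ((3:ℝ)/4) * (1 + α^2) ^ ((3:ℝ)/4 - 1))) * Phi α
        - Real.sqrt α * (1 + α^2) ^ ((3:ℝ)/4)
            * (Real.sqrt α * (1 + α ^ 2) ^ (-(1:ℝ)/4))) / (Phi α) ^ 2 - 1) α := by
    intro α hα
    rw [Set.mem_Ioi] at hα
    have hK : (0:ℝ) < 1 + α ^ 2 := by positivity
    have hB : HasDerivAt (fun s : ℝ => 1 + s ^ 2) (2 * α) α := by
      simpa using ((hasDerivAt_pow 2 α).const_add 1)
    have hu : HasDerivAt (fun α => Real.sqrt α * (1 + α^2) ^ ((3:ℝ)/4))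
        (1/(2 * Real.sqrt α) * (1 + α^2) ^ ((3:ℝ)/4)
          + Real.sqrt α * (2*α * ((3:ℝ)/4) * (1 + α^2) ^ ((3:ℝ)/4 - 1))) α :=
      (Real.hasDerivAt_sqrt hα.ne').mul (hB.rpow_const (Or.inl hK.ne'))
    exact (hu.div (phi_hasDeriv α) (phi_pos hα).ne').sub (hasDerivAt_id α)
  apply strictAntiOn_of_deriv_neg (convex_Ioi 0)
  · exact fun x hx => ((hderiv x hx).continuousAt).continuousWithinAt
  · intro α hα
    rw [interior_Ioi] at hα
    rw [(hderiv α hα).deriv]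
    rw [Set.mem_Ioi] at hα
    have hK : (0:ℝ) < 1 + α ^ 2 := by positivity
    have hΦpos := phi_pos hα
    have hsapos : 0 < Real.sqrt α := Real.sqrt_pos.2 hα
    set Φ := Phi α
    set sa := Real.sqrt α with hsa
    set t := (1 + α^2) ^ ((1:ℝ)/4) with ht
    have htpos : 0 < t := Real.rpow_pos_of_pos hK _
    have hsa2 : sa ^ 2 = α := Real.sq_sqrt hα.le
    have ht4 : t ^ 4 = 1 + α ^ 2 := by
      rw [ht, ← Real.rpow_natCast ((1 + α^2) ^ ((1:ℝ)/4)) 4, ← Real.rpow_mul hK.le]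
      norm_num
    have e1 : (1 + α^2) ^ ((3:ℝ)/4) = t ^ 3 := by
      rw [ht, ← Real.rpow_natCast ((1 + α^2) ^ ((1:ℝ)/4)) 3, ← Real.rpow_mul hK.le]
      norm_num
    have e2 : (1 + α^2) ^ ((3:ℝ)/4 - 1) = t⁻¹ := by
      rw [show ((3:ℝ)/4 - 1) = -((1:ℝ)/4) by norm_num, Real.rpow_neg hK.le, ht]
    have e3 : (1 + α^2) ^ (-(1:ℝ)/4) = t⁻¹ := by
      rw [show (-(1:ℝ)/4) = -((1:ℝ)/4) by norm_num, Real.rpow_neg hK.le, ht]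
    rw [e1, e2, e3]
    rw [sub_neg, div_lt_one (by positivity : (0:ℝ) < Φ ^ 2)]
    have h2sat : (0:ℝ) < 2 * sa * t := by positivity
    rw [← mul_lt_mul_iff_right₀ h2sat]
    have expand : 2 * sa * t * ((1/(2 * sa) * t ^ 3 + sa * (2*α * ((3:ℝ)/4) * t⁻¹)) * Φ
        - sa * t ^ 3 * (sa * t⁻¹)) = (1 + 4*α^2) * Φ - 2 * sa * t * (α * t ^ 2) := by
      field_simp
      linear_combination (4*Φ) * ht4 + (12*α*Φ - 8*sa*t^3) * hsa2
    rw [expand]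
    have := Hneg hα
    rw [← ht, ← hsa] at this
    nlinarith [this]

-- from t10.lean
lemma Jfun_eq {α : ℝ} (hα : 0 < α) :
    Jfun α = Real.sqrt α * (2 * (1 + α ^ 2) ^ (-(3:ℝ)/4) * Phi α) := by
  rw [Jfun, intervalIntegral.integral_congr
    (integrand_eq hα (fun s => s * (1 + s ^ 2) ^ (-(5:ℝ)/4))),
    intervalIntegral.integral_const_mul, key2 hα, key3 hα]

lemma Ifun_eq {α : ℝ} (hα : 0 < α) : Ifun α = 2 * α - α * Jfun α := by
  have hI : Ifun α = Real.sqrt α *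
      ∫ s in (0:ℝ)..α, (α - s) ^ (-(1:ℝ)/2) * (1 + s ^ 2) ^ (-(5:ℝ)/4) := by
    rw [Ifun, intervalIntegral.integral_congr
      (integrand_eq hα (fun s => (1 + s ^ 2) ^ (-(5:ℝ)/4))),
      intervalIntegral.integral_const_mul]
  have hJ : Jfun α = Real.sqrt α *
      ∫ s in (0:ℝ)..α, (α - s) ^ (-(1:ℝ)/2) * (s * (1 + s ^ 2) ^ (-(5:ℝ)/4)) := by
    rw [Jfun, intervalIntegral.integral_congr
      (integrand_eq hα (fun s => s * (1 + s ^ 2) ^ (-(5:ℝ)/4))),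
      intervalIntegral.integral_const_mul]
  have hadd : (∫ s in (0:ℝ)..α, (α - s) ^ (-(1:ℝ)/2) * (1 + s ^ 2) ^ (-(5:ℝ)/4))
      + α * ∫ s in (0:ℝ)..α, (α - s) ^ (-(1:ℝ)/2) * (s * (1 + s ^ 2) ^ (-(5:ℝ)/4))
      = 2 * Real.sqrt α := by
    rw [← intervalIntegral.integral_const_mul, ← intervalIntegral.integral_add
      (integrable_core hα cont_I) ((integrable_core hα cont_J).const_mul α)]
    rw [← key1 hα]
    apply intervalIntegral.integral_congr
    intro s _
    ring
  have hsq : Real.sqrt α * Real.sqrt α = α := Real.mul_self_sqrt hα.le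
  linear_combination hI + α * hJ + Real.sqrt α * hadd + 2 * hsq

lemma Ifun_pos {α : ℝ} (hα : 0 < α) : 0 < Ifun α := by
  have hI : Ifun α = Real.sqrt α *
      ∫ s in (0:ℝ)..α, (α - s) ^ (-(1:ℝ)/2) * (1 + s ^ 2) ^ (-(5:ℝ)/4) := by
    rw [Ifun, intervalIntegral.integral_congr
      (integrand_eq hα (fun s => (1 + s ^ 2) ^ (-(5:ℝ)/4))),
      intervalIntegral.integral_const_mul]
  rw [hI]
  apply mul_pos (Real.sqrt_pos.2 hα)
  apply intervalIntegral.intervalIntegral_pos_of_pos_on (integrable_core hα cont_I) _ hα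
  intro x hx
  have h1 : (0:ℝ) < (α - x) ^ (-(1:ℝ)/2) := Real.rpow_pos_of_pos (by linarith [hx.2]) _
  have h2 : (0:ℝ) < (1 + x ^ 2) ^ (-(5:ℝ)/4) := Real.rpow_pos_of_pos (by positivity) _
  positivity

lemma Jfun_pos {α : ℝ} (hα : 0 < α) : 0 < Jfun α := by
  rw [Jfun_eq hα]
  have := phi_pos hα
  have : (0:ℝ) < (1 + α ^ 2) ^ (-(3:ℝ)/4) := Real.rpow_pos_of_pos (by positivity) _
  have := Real.sqrt_pos.2 hα
  positivity

lemma div_IJ {α : ℝ} (hα : 0 < α) : Ifun α / Jfun α = Gaux α := by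
  have hΦ := phi_pos hα
  have hsa : (0:ℝ) < Real.sqrt α := Real.sqrt_pos.2 hα
  have hsa2 : Real.sqrt α ^ 2 = α := Real.sq_sqrt hα.le
  have hK : (0:ℝ) < 1 + α ^ 2 := by positivity
  have h34 : (0:ℝ) < (1 + α ^ 2) ^ ((3:ℝ)/4) := Real.rpow_pos_of_pos hK _
  have hneg : (1 + α ^ 2) ^ (-(3:ℝ)/4) = ((1 + α ^ 2) ^ ((3:ℝ)/4))⁻¹ := by
    rw [neg_div, Real.rpow_neg hK.le]
  rw [Ifun_eq hα, Jfun_eq hα, Gaux, hneg]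
  rw [div_eq_iff (by positivity : Real.sqrt α * (2 * ((1 + α ^ 2) ^ ((3:ℝ)/4))⁻¹ * Phi α) ≠ 0)]
  field_simp
  linear_combination (-((1 + α ^ 2) ^ ((3:ℝ)/4))) * hsa2

/-- The shooting height `α ↦ J(α)/(2I(α))` is strictly increasing on `(0,∞)`. -/
theorem stmt_11 : StrictMonoOn (fun α => Jfun α / (2 * Ifun α)) (Set.Ioi (0:ℝ)) := by
  intro a ha b hb hab
  simp only
  rw [Set.mem_Ioi] at ha hb
  have hIa := Ifun_pos ha
  have hIb := Ifun_pos hb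
  have hJa := Jfun_pos ha
  have hJb := Jfun_pos hb
  have hG : Gaux b < Gaux a := Gaux_anti (Set.mem_Ioi.2 ha) (Set.mem_Ioi.2 hb) hab
  rw [← div_IJ ha, ← div_IJ hb] at hG
  rw [div_lt_div_iff₀ hJb hJa] at hG
  rw [div_lt_div_iff₀ (by positivity) (by positivity)]
  nlinarith [hG]
end
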